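/- Let α₁,…,α₄, β₁,…,β₄ ∈ ℂ with the quartic polynomial q(λ) = α₁λ⁴ + (α₂−β₁)λ³ + (α₃−β₂)λ² + (α₄−β₃)λ − β₄ having four distinct roots and α₁ ≠ 0. Then the points (λ, 1, −1, −1/λ, 0, 0, 0, 0, 0) ∈ ℙ(2⁴,3⁴,4) for λ a root of q are exactly four distinct points, each satisfying the determinantal rank ≤ 1 condition for the matrix [[y₁,y₂,z₁],[y₃,y₄,z₂],[z₃,z₄,t]] and fixed by the involution (y₁,y₂,y₃,y₄,z₁,z₂,z₃,z₄,t) ↦ (−y₁,y₃,y₂,−y₄,−z₃,z₄,−z₁,z₂,−t). -/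

import Mathlib

open Polynomial

noncomputable section

/-- The weights of the coordinates `(y₁,…,y₄,z₁,…,z₄,t)` of `ℙ(2⁴,3⁴,4)`. -/
def wts : Fin 9 → ℕ := ![2, 2, 2, 2, 3, 3, 3, 3, 4]

/-- Two coordinate vectors represent the same point of `ℙ(2⁴,3⁴,4)` iff one is
a weighted scalar multiple of the other (`μ²` on `y`'s, `μ³` on `z`'s, `μ⁴` on `t`). -/
def wEq (p p' : Fin 9 → ℂ) : Prop :=
  ∃ μ : ℂ, μ ≠ 0 ∧ ∀ j, p' j = μ ^ (wts j) * p j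

/-- The point `(λ, 1, −1, −1/λ, 0, 0, 0, 0, 0)`. -/
def ptLam (l : ℂ) : Fin 9 → ℂ := ![l, 1, -1, -1 / l, 0, 0, 0, 0, 0]

/-- The involution `(y₁,y₂,y₃,y₄,z₁,z₂,z₃,z₄,t) ↦ (−y₁,y₃,y₂,−y₄,−z₃,z₄,−z₁,z₂,−t)`
acting on coordinate vectors. -/
def sigmaPt (p : Fin 9 → ℂ) : Fin 9 → ℂ :=
  ![-p 0, p 2, p 1, -p 3, -p 6, p 7, -p 4, p 5, -p 8]

/-- The determinantal matrix `[[y₁,y₂,z₁],[y₃,y₄,z₂],[z₃,z₄,t]]` at a point. -/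
def Npt (p : Fin 9 → ℂ) : Matrix (Fin 3) (Fin 3) ℂ :=
  !![p 0, p 1, p 4;
     p 2, p 3, p 5;
     p 6, p 7, p 8]

lemma vec9_4 {α : Type*} (a b c d e f g h i : α) : ![a,b,c,d,e,f,g,h,i] 4 = e := rfl
lemma vec9_5 {α : Type*} (a b c d e f g h i : α) : ![a,b,c,d,e,f,g,h,i] 5 = f := rfl
lemma vec9_6 {α : Type*} (a b c d e f g h i : α) : ![a,b,c,d,e,f,g,h,i] 6 = g := rfl
lemma vec9_7 {α : Type*} (a b c d e f g h i : α) : ![a,b,c,d,e,f,g,h,i] 7 = h := rfl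
lemma vec9_8 {α : Type*} (a b c d e f g h i : α) : ![a,b,c,d,e,f,g,h,i] 8 = i := rfl

/-- for the quartic
`q(λ) = α₁λ⁴ + (α₂−β₁)λ³ + (α₃−β₂)λ² + (α₄−β₃)λ − β₄` with four distinct
roots, `α₁ ≠ 0` (and `β₄ ≠ 0`, ensuring `λ ≠ 0`), the points
`(λ, 1, −1, −1/λ, 0,…,0)` for `λ` a root of `q` are exactly four distinct
points of `ℙ(2⁴,3⁴,4)`, each satisfying the determinantal rank ≤ 1 condition
and fixed by the involution `σ`. -/
theorem stmt18 (α₁ α₂ α₃ α₄ β₁ β₂ β₃ β₄ : ℂ)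
    (q : Polynomial ℂ)
    (hq : q = C α₁ * X ^ 4 + C (α₂ - β₁) * X ^ 3 + C (α₃ - β₂) * X ^ 2
      + C (α₄ - β₃) * X - C β₄)
    (hα₁ : α₁ ≠ 0) (hβ₄ : β₄ ≠ 0)
    (hdistinct : q.roots.toFinset.card = 4) :
    (∀ l l' : ℂ, q.eval l = 0 → q.eval l' = 0 → wEq (ptLam l) (ptLam l') → l = l') ∧
    (∀ l : ℂ, q.eval l = 0 → ∀ i j k m : Fin 3,
      Npt (ptLam l) i k * Npt (ptLam l) j m
        - Npt (ptLam l) i m * Npt (ptLam l) j k = 0) ∧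
    (∀ l : ℂ, q.eval l = 0 → wEq (ptLam l) (sigmaPt (ptLam l))) := by
  have hroot0 : ∀ l : ℂ, q.eval l = 0 → l ≠ 0 := by
    intro l hl h0
    subst h0
    simp [hq] at hl
    exact hβ₄ hl
  refine ⟨?_, ?_, ?_⟩
  · rintro l l' hl hl' ⟨μ, hμ, h⟩
    have h1 := h 1
    have h0 := h 0
    simp [ptLam, wts] at h1 h0
    rw [h0, ← h1, one_mul]
  · intro l hl i j k m
    have hl0 := hroot0 l hl
    have hN : Npt (ptLam l) = !![l, 1, 0; -1, -1/l, 0; 0, 0, 0] := by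
      ext a b; fin_cases a <;> fin_cases b <;> rfl
    rw [hN]
    fin_cases i <;> fin_cases j <;> fin_cases k <;> fin_cases m <;>
      (try simp [Matrix.vecHead, Matrix.vecTail]) <;> (try field_simp) <;> ring
  · intro l hl
    have hl0 := hroot0 l hl
    refine ⟨Complex.I, Complex.I_ne_zero, ?_⟩
    intro j
    fin_cases j <;>
      simp [ptLam, sigmaPt, wts, vec9_4, vec9_5, vec9_6, vec9_7, vec9_8,
        Complex.I_sq, neg_div] <;>
      (try field_simp)

end
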